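/- Let ε > 0 and let G be a graph on n vertices with at least n²/4 edges, at least one triangle, and book number at most (1/6 + ε³)n. Then the number of vertices v with |d(v) - n/2| ≥ εn is at most εn. -/

import Mathlib

open Finset SimpleGraph

set_option linter.unusedSectionVars false
set_option maxHeartbeats 1600000

section AlmostRegularAux

variable {V : Type*} [Fintype V] [DecidableEq V] (G : SimpleGraph V) [DecidableRel G.Adj]

private lemma ar_codeg_lower (u v : V) :
    (G.degree u : ℝ) + G.degree v - Fintype.card V
      ≤ ((G.neighborFinset u ∩ G.neighborFinset v).card : ℝ) := by
  have h1 := Finset.card_union_add_card_inter (G.neighborFinset u) (G.neighborFinset v)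
  have h2 : (G.neighborFinset u ∪ G.neighborFinset v).card ≤ Fintype.card V := by
    simpa using Finset.card_le_card (Finset.subset_univ _)
  have hu : (G.neighborFinset u).card = G.degree u := G.card_neighborFinset_eq_degree u
  have hv : (G.neighborFinset v).card = G.degree v := G.card_neighborFinset_eq_degree v
  rw [hu, hv] at h1
  have h3 : (G.degree u + G.degree v : ℕ)
      ≤ Fintype.card V + (G.neighborFinset u ∩ G.neighborFinset v).card := by omega
  have h4 := (Nat.cast_le (α := ℝ)).mpr h3
  push_cast at h4
  linarith

private lemma ar_union3 (x y z : V) :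
    (G.degree x : ℝ) + G.degree y + G.degree z ≤ Fintype.card V
      + ((G.neighborFinset x ∩ G.neighborFinset y).card : ℝ)
      + ((G.neighborFinset y ∩ G.neighborFinset z).card : ℝ)
      + ((G.neighborFinset x ∩ G.neighborFinset z).card : ℝ) := by
  set a := G.neighborFinset x
  set b := G.neighborFinset y
  set c := G.neighborFinset z
  have h1 : (a ∪ b ∪ c).card ≤ Fintype.card V := by
    simpa using Finset.card_le_card (Finset.subset_univ _)
  have h2 := Finset.card_union_add_card_inter a b
  have h3 := Finset.card_union_add_card_inter (a ∪ b) c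
  have h4 : (a ∪ b) ∩ c = a ∩ c ∪ b ∩ c := Finset.union_inter_distrib_right a b c
  have h5 : (a ∩ c ∪ b ∩ c).card ≤ (a ∩ c).card + (b ∩ c).card := Finset.card_union_le _ _
  rw [h4] at h3
  have hx : a.card = G.degree x := G.card_neighborFinset_eq_degree x
  have hy : b.card = G.degree y := G.card_neighborFinset_eq_degree y
  have hz : c.card = G.degree z := G.card_neighborFinset_eq_degree z
  have h6 : G.degree x + G.degree y + G.degree z ≤ Fintype.card V
      + (a ∩ b).card + (b ∩ c).card + (a ∩ c).card := by omega
  have h7 := (Nat.cast_le (α := ℝ)).mpr h6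
  push_cast at h7
  linarith

private lemma ar_triple (B : ℝ) (hBpos : 0 < B)
    (hB : ∀ u v, G.Adj u v → ((G.neighborFinset u ∩ G.neighborFinset v).card : ℝ) ≤ B)
    (x y z : V) (hxy : G.Adj x y) (hyz : G.Adj y z) (hxz : G.Adj x z) :
    ((G.degree x : ℝ) + G.degree y - Fintype.card V)
        / ((G.neighborFinset x ∩ G.neighborFinset y).card : ℝ)
      + ((G.degree y : ℝ) + G.degree z - Fintype.card V)
        / ((G.neighborFinset y ∩ G.neighborFinset z).card : ℝ)
      + ((G.degree x : ℝ) + G.degree z - Fintype.card V)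
        / ((G.neighborFinset x ∩ G.neighborFinset z).card : ℝ)
      ≤ 6 - Fintype.card V / B := by
  set n : ℝ := (Fintype.card V : ℝ) with hn
  set c1 : ℝ := ((G.neighborFinset x ∩ G.neighborFinset y).card : ℝ) with hc1
  set c2 : ℝ := ((G.neighborFinset y ∩ G.neighborFinset z).card : ℝ) with hc2
  set c3 : ℝ := ((G.neighborFinset x ∩ G.neighborFinset z).card : ℝ) with hc3
  set s1 : ℝ := (G.degree x : ℝ) + G.degree y - n
  set s2 : ℝ := (G.degree y : ℝ) + G.degree z - n
  set s3 : ℝ := (G.degree x : ℝ) + G.degree z - n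
  have hc1pos : 0 < c1 := by
    rw [hc1]
    exact_mod_cast Finset.card_pos.mpr ⟨z, by simp [mem_neighborFinset, hxz, hyz]⟩
  have hc2pos : 0 < c2 := by
    rw [hc2]
    exact_mod_cast Finset.card_pos.mpr ⟨x, by simp [mem_neighborFinset, hxy.symm, hxz.symm]⟩
  have hc3pos : 0 < c3 := by
    rw [hc3]
    exact_mod_cast Finset.card_pos.mpr ⟨y, by simp [mem_neighborFinset, hxy, hyz.symm]⟩
  have hs1 : s1 ≤ c1 := ar_codeg_lower G x y
  have hs2 : s2 ≤ c2 := ar_codeg_lower G y z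
  have hs3 : s3 ≤ c3 := ar_codeg_lower G x z
  have hb1 : c1 ≤ B := hB x y hxy
  have hb2 : c2 ≤ B := hB y z hyz
  have hb3 : c3 ≤ B := hB x z hxz
  have hu : s1 + s2 + s3 ≤ 2 * (c1 + c2 + c3) - n := by
    have h := ar_union3 G x y z
    rw [← hc1, ← hc2, ← hc3, ← hn] at h
    simp only [s1, s2, s3]
    linarith
  have key : ∀ s c : ℝ, 0 < c → c ≤ B → s ≤ c → s / c ≤ 1 + (s - c) / B := by
    intro s c hc hcB hsc
    have t1 : (s - c) / c ≤ (s - c) / B := by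
      rw [div_le_div_iff₀ hc hBpos]
      nlinarith
    have t2 : s / c = 1 + (s - c) / c := by field_simp; ring
    linarith
  have e1 := key s1 c1 hc1pos hb1 hs1
  have e2 := key s2 c2 hc2pos hb2 hs2
  have e3 := key s3 c3 hc3pos hb3 hs3
  have hq : (s1 - c1) / B + (s2 - c2) / B + (s3 - c3) / B ≤ 3 - n / B := by
    have hsum : (s1 - c1) / B + (s2 - c2) / B + (s3 - c3) / B
        = ((s1 - c1) + (s2 - c2) + (s3 - c3)) / B := by ring
    rw [hsum, div_le_iff₀ hBpos]
    have h9 : (3 - n / B) * B = 3 * B - n := by field_simp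
    rw [h9]
    linarith
  linarith

private lemma ar_deg_filter (x : V) :
    (Finset.univ.filter (G.Adj x)).card = G.degree x := by
  rw [← neighborFinset_eq_filter, card_neighborFinset_eq_degree]

private lemma ar_deg_filter' (y : V) :
    (Finset.univ.filter fun x => G.Adj x y).card = G.degree y := by
  have h : (Finset.univ.filter fun x => G.Adj x y) = Finset.univ.filter (G.Adj y) := by
    ext x; simp [adj_comm]
  rw [h, ar_deg_filter]

private lemma ar_count (P : V → Prop) [DecidablePred P] (a : ℝ) :
    ∑ z, (if P z then a else 0) = ((Finset.univ.filter P).card : ℝ) * a := by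
  rw [← Finset.sum_filter, Finset.sum_const, nsmul_eq_mul]

private lemma ar_filter (u v : V) :
    (Finset.univ.filter fun z => G.Adj u z ∧ G.Adj v z)
      = G.neighborFinset u ∩ G.neighborFinset v := by
  ext z; simp [mem_neighborFinset]

private lemma ar_trsum1 (f : V → V → ℝ) :
    ∑ t ∈ (Finset.univ.filter fun t : V × V × V =>
        G.Adj t.1 t.2.1 ∧ G.Adj t.2.1 t.2.2 ∧ G.Adj t.1 t.2.2), f t.1 t.2.1
      = ∑ x, ∑ y, if G.Adj x y then
          ((G.neighborFinset x ∩ G.neighborFinset y).card : ℝ) * f x y else 0 := by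
  rw [Finset.sum_filter, Fintype.sum_prod_type]
  refine Finset.sum_congr rfl fun x _ => ?_
  rw [Fintype.sum_prod_type]
  dsimp only
  refine Finset.sum_congr rfl fun y _ => ?_
  by_cases h : G.Adj x y
  · simp only [h, true_and, if_true]
    rw [ar_count, ar_filter, Finset.inter_comm]
  · simp [h]

private lemma ar_trsum2 (f : V → V → ℝ) :
    ∑ t ∈ (Finset.univ.filter fun t : V × V × V =>
        G.Adj t.1 t.2.1 ∧ G.Adj t.2.1 t.2.2 ∧ G.Adj t.1 t.2.2), f t.2.1 t.2.2
      = ∑ x, ∑ y, if G.Adj x y then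
          ((G.neighborFinset x ∩ G.neighborFinset y).card : ℝ) * f x y else 0 := by
  rw [Finset.sum_filter, Fintype.sum_prod_type, Finset.sum_comm, Fintype.sum_prod_type]
  refine Finset.sum_congr rfl fun y _ => ?_
  dsimp only
  refine Finset.sum_congr rfl fun z _ => ?_
  by_cases h : G.Adj y z
  · have h2 : ∀ x, (G.Adj x y ∧ G.Adj y z ∧ G.Adj x z) = (G.Adj y x ∧ G.Adj z x) := by
      intro x; rw [eq_iff_iff]
      constructor
      · rintro ⟨a, _, c⟩; exact ⟨a.symm, c.symm⟩
      · rintro ⟨a, b⟩; exact ⟨a.symm, h, b.symm⟩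
    simp only [h2]
    rw [ar_count, ar_filter]
    simp [h]
  · have h2 : ∀ x, (G.Adj x y ∧ G.Adj y z ∧ G.Adj x z) = False := by
      intro x; simp [h]
    simp [h2, h]

private lemma ar_trsum3 (f : V → V → ℝ) :
    ∑ t ∈ (Finset.univ.filter fun t : V × V × V =>
        G.Adj t.1 t.2.1 ∧ G.Adj t.2.1 t.2.2 ∧ G.Adj t.1 t.2.2), f t.1 t.2.2
      = ∑ x, ∑ y, if G.Adj x y then
          ((G.neighborFinset x ∩ G.neighborFinset y).card : ℝ) * f x y else 0 := by
  rw [Finset.sum_filter, Fintype.sum_prod_type]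
  refine Finset.sum_congr rfl fun x _ => ?_
  rw [Fintype.sum_prod_type, Finset.sum_comm]
  dsimp only
  refine Finset.sum_congr rfl fun z _ => ?_
  by_cases h : G.Adj x z
  · have h2 : ∀ y, (G.Adj x y ∧ G.Adj y z ∧ G.Adj x z) = (G.Adj x y ∧ G.Adj z y) := by
      intro y; rw [eq_iff_iff]
      constructor
      · rintro ⟨a, b, _⟩; exact ⟨a, b.symm⟩
      · rintro ⟨a, b⟩; exact ⟨a, b.symm, h⟩
    simp only [h2]
    rw [ar_count, ar_filter]
    simp [h]
  · have h2 : ∀ y, (G.Adj x y ∧ G.Adj y z ∧ G.Adj x z) = False := by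
      intro y; simp [h]
    simp [h2, h]

private lemma ar_sum_s :
    ∑ x, ∑ y, (if G.Adj x y then
        (G.degree x : ℝ) + G.degree y - Fintype.card V else 0)
      = 2 * (∑ v, (G.degree v : ℝ) ^ 2)
        - 2 * Fintype.card V * G.edgeFinset.card := by
  have split : ∀ x y : V, (if G.Adj x y then
      (G.degree x : ℝ) + G.degree y - Fintype.card V else 0)
      = (if G.Adj x y then (G.degree x : ℝ) else 0)
        + (if G.Adj x y then (G.degree y : ℝ) else 0)
        - (if G.Adj x y then (Fintype.card V : ℝ) else 0) := by
    intro x y; split <;> ring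
  simp only [split, Finset.sum_sub_distrib, Finset.sum_add_distrib]
  have h1 : ∑ x, ∑ y, (if G.Adj x y then (G.degree x : ℝ) else 0)
      = ∑ v, (G.degree v : ℝ) ^ 2 := by
    refine Finset.sum_congr rfl fun x _ => ?_
    rw [ar_count, ar_deg_filter]; ring
  have h2 : ∑ x, ∑ y, (if G.Adj x y then (G.degree y : ℝ) else 0)
      = ∑ v, (G.degree v : ℝ) ^ 2 := by
    rw [Finset.sum_comm]
    refine Finset.sum_congr rfl fun y _ => ?_
    rw [ar_count, ar_deg_filter']; ring
  have h3 : ∑ x, ∑ y, (if G.Adj x y then (Fintype.card V : ℝ) else 0)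
      = Fintype.card V * (2 * G.edgeFinset.card) := by
    have h : ∀ x : V, ∑ y, (if G.Adj x y then (Fintype.card V : ℝ) else 0)
        = (G.degree x : ℝ) * Fintype.card V := by
      intro x; rw [ar_count, ar_deg_filter]
    simp only [h]
    rw [← Finset.sum_mul]
    have hd : ∑ v, (G.degree v : ℝ) = 2 * G.edgeFinset.card := by
      rw [← Nat.cast_sum, G.sum_degrees_eq_twice_card_edges]
      push_cast; ring
    rw [hd]; ring
  rw [h1, h2, h3]; ring

end AlmostRegularAux

/-- Let `ε > 0` and let `G` be a graph on `n` vertices with at least `n²/4` edges, at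
least one triangle, and book number at most `(1/6 + ε³)n`. Then the number of vertices
`v` with `|d(v) - n/2| ≥ εn` is at most `εn`. -/
theorem almost_regular {V : Type*} [Fintype V] [DecidableEq V] (G : SimpleGraph V)
    [DecidableRel G.Adj] (n : ℕ) (ε : ℝ) (hε : 0 < ε) (hn : Fintype.card V = n)
    (hm : (n : ℝ) ^ 2 / 4 ≤ G.edgeFinset.card)
    (htri : (G.cliqueFinset 3).Nonempty)
    (hbook : ∀ u v : V, G.Adj u v →
      ((G.neighborFinset u ∩ G.neighborFinset v).card : ℝ) ≤ (1 / 6 + ε ^ 3) * n) :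
    ((Finset.univ.filter fun v : V => ε * n ≤ |(G.degree v : ℝ) - n / 2|).card : ℝ)
      ≤ ε * n := by
  subst hn
  set N : ℝ := (Fintype.card V : ℝ) with hN
  have hne : Nonempty V := by
    obtain ⟨s, hs⟩ := htri
    rw [mem_cliqueFinset_iff] at hs
    obtain ⟨v, -⟩ := Finset.card_pos.mp (by rw [hs.2]; norm_num)
    exact ⟨v⟩
  have hN1 : (1 : ℝ) ≤ N := by
    rw [hN]; exact_mod_cast Fintype.card_pos
  set B : ℝ := (1 / 6 + ε ^ 3) * N with hB
  have hε3 : 0 < ε ^ 3 := by positivity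
  have hBpos : 0 < B := by rw [hB]; nlinarith
  set m : ℝ := (G.edgeFinset.card : ℝ) with hm'
  have hm0 : 0 ≤ m := by positivity
  set S : ℝ := ∑ v, (G.degree v : ℝ) ^ 2 with hS
  set F : V → V → ℝ := fun u v => ((G.degree u : ℝ) + G.degree v - N)
      / ((G.neighborFinset u ∩ G.neighborFinset v).card : ℝ) with hF
  set R : ℝ := ∑ x, ∑ y, (if G.Adj x y then
      ((G.neighborFinset x ∩ G.neighborFinset y).card : ℝ) * F x y else 0) with hR
  -- upper bound on 3R
  have h3R : 3 * R = ∑ t ∈ (Finset.univ.filter fun t : V × V × V =>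
        G.Adj t.1 t.2.1 ∧ G.Adj t.2.1 t.2.2 ∧ G.Adj t.1 t.2.2),
        (F t.1 t.2.1 + F t.2.1 t.2.2 + F t.1 t.2.2) := by
    rw [Finset.sum_add_distrib, Finset.sum_add_distrib,
      ar_trsum1 G F, ar_trsum2 G F, ar_trsum3 G F, hR]
    ring
  have htriple : ∀ t ∈ (Finset.univ.filter fun t : V × V × V =>
        G.Adj t.1 t.2.1 ∧ G.Adj t.2.1 t.2.2 ∧ G.Adj t.1 t.2.2),
      F t.1 t.2.1 + F t.2.1 t.2.2 + F t.1 t.2.2 ≤ 6 - N / B := by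
    intro t ht
    rw [Finset.mem_filter] at ht
    obtain ⟨-, hxy, hyz, hxz⟩ := ht
    exact ar_triple G B hBpos (fun u v h => hbook u v h) t.1 t.2.1 t.2.2 hxy hyz hxz
  have h6 : 0 ≤ 6 - N / B := by
    rw [sub_nonneg, div_le_iff₀ hBpos, hB]
    nlinarith
  have hTrcard : ((Finset.univ.filter fun t : V × V × V =>
        G.Adj t.1 t.2.1 ∧ G.Adj t.2.1 t.2.2 ∧ G.Adj t.1 t.2.2).card : ℝ) ≤ 2 * m * B := by
    have h1 : ((Finset.univ.filter fun t : V × V × V =>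
        G.Adj t.1 t.2.1 ∧ G.Adj t.2.1 t.2.2 ∧ G.Adj t.1 t.2.2).card : ℝ)
        = ∑ t ∈ (Finset.univ.filter fun t : V × V × V =>
        G.Adj t.1 t.2.1 ∧ G.Adj t.2.1 t.2.2 ∧ G.Adj t.1 t.2.2), (1 : ℝ) := by
      rw [Finset.sum_const, nsmul_eq_mul, mul_one]
    rw [h1, ar_trsum1 G (fun _ _ => (1 : ℝ))]
    have h2 : ∀ x : V, ∑ y, (if G.Adj x y then
        ((G.neighborFinset x ∩ G.neighborFinset y).card : ℝ) * 1 else 0)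
        ≤ ∑ y, (if G.Adj x y then B else 0) := by
      intro x
      refine Finset.sum_le_sum fun y _ => ?_
      by_cases h : G.Adj x y
      · simp only [h, if_true, mul_one]; exact hbook x y h
      · simp [h]
    have h3 : ∑ x, ∑ y, (if G.Adj x y then B else 0) = 2 * m * B := by
      have h : ∀ x : V, ∑ y, (if G.Adj x y then B else 0) = (G.degree x : ℝ) * B := by
        intro x; rw [ar_count, ar_deg_filter]
      simp only [h]
      rw [← Finset.sum_mul]
      have hd : ∑ v, (G.degree v : ℝ) = 2 * m := by
        rw [hm', ← Nat.cast_sum, G.sum_degrees_eq_twice_card_edges]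
        push_cast; ring
      rw [hd]
    calc ∑ x, ∑ y, (if G.Adj x y then
        ((G.neighborFinset x ∩ G.neighborFinset y).card : ℝ) * 1 else 0)
        ≤ ∑ x, ∑ y, (if G.Adj x y then B else 0) := Finset.sum_le_sum fun x _ => h2 x
      _ = 2 * m * B := h3
  have hRup : 3 * R ≤ 12 * ε ^ 3 * N * m := by
    have h4 : 3 * R ≤ ((Finset.univ.filter fun t : V × V × V =>
        G.Adj t.1 t.2.1 ∧ G.Adj t.2.1 t.2.2 ∧ G.Adj t.1 t.2.2).card : ℝ) * (6 - N / B) := by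
      rw [h3R]
      calc ∑ t ∈ (Finset.univ.filter fun t : V × V × V =>
            G.Adj t.1 t.2.1 ∧ G.Adj t.2.1 t.2.2 ∧ G.Adj t.1 t.2.2),
            (F t.1 t.2.1 + F t.2.1 t.2.2 + F t.1 t.2.2)
          ≤ ∑ _t ∈ (Finset.univ.filter fun t : V × V × V =>
            G.Adj t.1 t.2.1 ∧ G.Adj t.2.1 t.2.2 ∧ G.Adj t.1 t.2.2), (6 - N / B) :=
            Finset.sum_le_sum htriple
        _ = _ := by rw [Finset.sum_const, nsmul_eq_mul]
    have h5 : ((Finset.univ.filter fun t : V × V × V =>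
        G.Adj t.1 t.2.1 ∧ G.Adj t.2.1 t.2.2 ∧ G.Adj t.1 t.2.2).card : ℝ) * (6 - N / B)
        ≤ (2 * m * B) * (6 - N / B) := mul_le_mul_of_nonneg_right hTrcard h6
    have e1 : B * (N / B) = N := by field_simp
    have e2 : (2 * m * B) * (6 - N / B) = 12 * m * B - 2 * m * (B * (N / B)) := by ring
    rw [e1] at e2
    have e3 : (2 * m * B) * (6 - N / B) = 12 * ε ^ 3 * N * m := by
      rw [e2, hB]; ring
    linarith
  -- lower bound on R
  have hsmall : ∀ x y : V, G.Adj x y → (G.degree x : ℝ) + G.degree y - N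
      ≤ ((G.neighborFinset x ∩ G.neighborFinset y).card : ℝ) * F x y := by
    intro x y hxy
    have hl := ar_codeg_lower G x y
    rw [← hN] at hl
    by_cases hc : ((G.neighborFinset x ∩ G.neighborFinset y).card : ℝ) = 0
    · rw [hc, zero_mul]
      rw [hc] at hl
      linarith
    · have : ((G.neighborFinset x ∩ G.neighborFinset y).card : ℝ) * F x y
          = (G.degree x : ℝ) + G.degree y - N := by
        rw [hF]
        field_simp
      rw [this]
  have hRlow : 2 * S - 2 * N * m ≤ R := by
    have h := ar_sum_s G
    rw [← hN, ← hm', ← hS] at h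
    have h2 : ∑ x, ∑ y, (if G.Adj x y then (G.degree x : ℝ) + G.degree y - N else 0) ≤ R := by
      rw [hR]
      refine Finset.sum_le_sum fun x _ => Finset.sum_le_sum fun y _ => ?_
      by_cases hxy : G.Adj x y
      · simp only [hxy, if_true]; exact hsmall x y hxy
      · simp [hxy]
    linarith
  have hSup : S - N * m ≤ 2 * ε ^ 3 * N * m := by linarith
  -- variance bound
  have hvar : ∑ v, ((G.degree v : ℝ) - N / 2) ^ 2 = S - 2 * N * m + N ^ 3 / 4 := by
    have expand : ∀ v : V, ((G.degree v : ℝ) - N / 2) ^ 2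
        = (G.degree v : ℝ) ^ 2 - N * (G.degree v : ℝ) + N ^ 2 / 4 := by
      intro v; ring
    simp only [expand]
    rw [Finset.sum_add_distrib, Finset.sum_sub_distrib, ← Finset.mul_sum]
    have hd : ∑ v, (G.degree v : ℝ) = 2 * m := by
      rw [hm', ← Nat.cast_sum, G.sum_degrees_eq_twice_card_edges]
      push_cast; ring
    have hcst : ∑ _v : V, (N ^ 2 / 4 : ℝ) = N ^ 3 / 4 := by
      rw [Finset.sum_const, nsmul_eq_mul, Finset.card_univ, ← hN]
      ring
    rw [hd, hcst, ← hS]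
    ring
  have hdeg_le : ∀ v : V, (G.degree v : ℝ) ≤ N := by
    intro v
    rw [hN]
    exact_mod_cast (G.degree_lt_card_verts v).le
  have hm_up : m ≤ N ^ 2 / 2 := by
    have hd : 2 * m = ∑ v, (G.degree v : ℝ) := by
      rw [hm', ← Nat.cast_sum, G.sum_degrees_eq_twice_card_edges]
      push_cast; ring
    have h1 : ∑ v, (G.degree v : ℝ) ≤ ∑ _v : V, N := Finset.sum_le_sum fun v _ => hdeg_le v
    have h2 : ∑ _v : V, N = N ^ 2 := by
      rw [Finset.sum_const, nsmul_eq_mul, Finset.card_univ, ← hN]; ring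
    linarith
  have hvar_le : ∑ v, ((G.degree v : ℝ) - N / 2) ^ 2 ≤ ε ^ 3 * N ^ 3 := by
    rw [hvar]
    have h1 : N ^ 3 / 4 ≤ N * m := by nlinarith
    have h2 : 2 * ε ^ 3 * N * m ≤ ε ^ 3 * N ^ 3 := by
      have h3 := mul_le_mul_of_nonneg_left hm_up (by positivity : (0:ℝ) ≤ 2 * ε ^ 3 * N)
      nlinarith [h3]
    linarith
  -- conclusion
  set K := Finset.univ.filter fun v : V => ε * N ≤ |(G.degree v : ℝ) - N / 2| with hK
  have hKsum : (K.card : ℝ) * (ε * N) ^ 2 ≤ ∑ v, ((G.degree v : ℝ) - N / 2) ^ 2 := by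
    calc (K.card : ℝ) * (ε * N) ^ 2 = ∑ _v ∈ K, (ε * N) ^ 2 := by
          rw [Finset.sum_const, nsmul_eq_mul]
      _ ≤ ∑ v ∈ K, ((G.degree v : ℝ) - N / 2) ^ 2 := by
          refine Finset.sum_le_sum fun v hv => ?_
          rw [hK, Finset.mem_filter] at hv
          have h := hv.2
          have h2 : (ε * N) ^ 2 ≤ |(G.degree v : ℝ) - N / 2| ^ 2 :=
            pow_le_pow_left₀ (by positivity) h 2
          rwa [sq_abs] at h2
      _ ≤ ∑ v, ((G.degree v : ℝ) - N / 2) ^ 2 :=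
          Finset.sum_le_sum_of_subset_of_nonneg (Finset.subset_univ _)
            (fun v _ _ => by positivity)
  have hfin : (K.card : ℝ) * (ε * N) ^ 2 ≤ (ε * N) * (ε * N) ^ 2 := by
    have h : (ε * N) * (ε * N) ^ 2 = ε ^ 3 * N ^ 3 := by ring
    linarith
  exact le_of_mul_le_mul_right hfin (by positivity)
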